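/- arXiv:1109.4660 — 5 statements merged into one kernel-verified Lean document; each statement's English description precedes it below -/
import Mathlib

section
/- For all natural numbers n, m, every real number a, and every natural number k with k < min(n, m), the linearization coefficient of the Bessel polynomials vanishes: β_k^{(n,m)}(a) = 0. -/
open Finset

/-- The Bessel polynomial `q_n`, normalized so that `q_n(0) = 1`. -/
noncomputable def besselQ (n : ℕ) (u : ℝ) : ℝ :=
  ∑ k ∈ Finset.range (n + 1),
    ((n.factorial : ℝ) * (2 * n - k).factorial * 2 ^ k) /
      ((2 * n).factorial * (n - k).factorial * k.factorial) * u ^ k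

/-- The Pochhammer symbol `(x)_j = x (x+1) ⋯ (x+j-1)`. -/
noncomputable def poch (x : ℝ) (j : ℕ) : ℝ := ∏ i ∈ Finset.range j, (x + i)

/-- Generalized binomial coefficient with integer (possibly negative) upper entry. -/
noncomputable def gbinom (z : ℤ) (j : ℕ) : ℝ :=
  (∏ i ∈ Finset.range j, ((z : ℝ) - i)) / j.factorial

noncomputable def bqc (k j : ℕ) : ℝ :=
  (2 ^ j * k.descFactorial j : ℝ) / (j.factorial * (2 * k).descFactorial j)

noncomputable def bq (k : ℕ) : Polynomial ℝ :=
  ∑ j ∈ Finset.range (k + 1), Polynomial.C (bqc k j) * Polynomial.X ^ j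

lemma bqc_of_gt {k j : ℕ} (h : k < j) : bqc k j = 0 := by
  simp [bqc, Nat.descFactorial_eq_zero_iff_lt.mpr h]

lemma bq_coeff (k j : ℕ) : (bq k).coeff j = bqc k j := by
  rw [bq, Polynomial.finset_sum_coeff]
  simp only [Polynomial.coeff_C_mul, Polynomial.coeff_X_pow]
  rcases le_or_gt j k with h | h
  · rw [Finset.sum_eq_single j]
    · simp
    · intro b _ hb; simp [Ne.symm hb]
    · intro hj; exact absurd (Finset.mem_range.mpr (by omega)) (fun c => hj c)
  · rw [bqc_of_gt h, Finset.sum_eq_zero]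
    intro b hb
    have : b ≠ j := by simp at hb; omega
    simp only [if_neg (Ne.symm this), mul_zero]

lemma bqc_eq {k j : ℕ} (hj : j ≤ k) :
    bqc k j = ((k.factorial : ℝ) * (2 * k - j).factorial * 2 ^ j) /
      ((2 * k).factorial * (k - j).factorial * j.factorial) := by
  have h2 : j ≤ 2 * k := by omega
  have h1 : ((k - j).factorial * k.descFactorial j : ℝ) = k.factorial := by
    exact_mod_cast congrArg (Nat.cast (R := ℝ)) (Nat.factorial_mul_descFactorial hj)
  have h2' : (((2 * k) - j).factorial * (2 * k).descFactorial j : ℝ) = (2 * k).factorial := by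
    exact_mod_cast congrArg (Nat.cast (R := ℝ)) (Nat.factorial_mul_descFactorial h2)
  have n1 : ((k - j).factorial : ℝ) ≠ 0 := Nat.cast_ne_zero.mpr (Nat.factorial_ne_zero _)
  have n2 : (((2 * k) - j).factorial : ℝ) ≠ 0 := Nat.cast_ne_zero.mpr (Nat.factorial_ne_zero _)
  have n3 : ((j.factorial : ℝ)) ≠ 0 := Nat.cast_ne_zero.mpr (Nat.factorial_ne_zero _)
  have n4 : ((2 * k).descFactorial j : ℝ) ≠ 0 := by
    simpa [Nat.descFactorial_eq_zero_iff_lt] using (by omega : ¬ (2*k < j))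
  have n5 : ((2 * k).factorial : ℝ) ≠ 0 := Nat.cast_ne_zero.mpr (Nat.factorial_ne_zero _)
  rw [bqc]
  field_simp
  linear_combination ((2*k).factorial : ℝ) * h1 - (k.factorial : ℝ) * h2'

lemma bq_eval (k : ℕ) (u : ℝ) : (bq k).eval u = besselQ k u := by
  rw [bq, besselQ, Polynomial.eval_finset_sum]
  refine Finset.sum_congr rfl fun j hj => ?_
  rw [Polynomial.eval_mul, Polynomial.eval_C, Polynomial.eval_pow, Polynomial.eval_X,
    bqc_eq (by simpa using Nat.lt_succ_iff.mp (Finset.mem_range.mp hj))]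

lemma bqc_rec (k i : ℕ) :
    bqc (k+2) (i+2) = bqc (k+1) (i+2)
      + (1 / ((2*(k:ℝ)+3) * (2*(k:ℝ)+1))) * bqc k i := by
  rcases lt_or_ge k i with h | h
  · rw [bqc_of_gt (by omega), bqc_of_gt (by omega), bqc_of_gt (by omega), mul_zero, add_zero]
  · -- i ≤ k
    have hA : (((k+2).descFactorial (i+2) : ℕ) : ℝ)
        = (k+2) * (k+1) * (k.descFactorial i) := by
      rw [Nat.succ_descFactorial_succ, Nat.succ_descFactorial_succ]; push_cast; ring
    have hB : (((k+1).descFactorial (i+2) : ℕ) : ℝ)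
        = (k+1) * ((k:ℝ) - i) * (k.descFactorial i) := by
      rw [Nat.succ_descFactorial_succ, Nat.descFactorial_succ, Nat.cast_mul, Nat.cast_mul,
        Nat.cast_sub h]; push_cast; ring
    have e1 : 2 * (k+2) = (2*k+3) + 1 := by ring
    have e2 : 2*k+3 = (2*k+2) + 1 := by ring
    have e3 : 2 * (k+1) = (2*k+1) + 1 := by ring
    have e4 : 2*k+1 = (2*k) + 1 := by ring
    have hC : (((2*(k+2)).descFactorial (i+2) : ℕ) : ℝ)
        = (2*(k:ℝ)+4) * (2*(k:ℝ)+3) * ((2*k+2).descFactorial i) := by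
      rw [e1, Nat.succ_descFactorial_succ, e2, Nat.succ_descFactorial_succ]; push_cast; ring
    have hD : (((2*(k+1)).descFactorial (i+2) : ℕ) : ℝ)
        = (2*(k:ℝ)+2) * (2*(k:ℝ)+1) * ((2*k).descFactorial i) := by
      rw [e3, Nat.succ_descFactorial_succ, e4, Nat.succ_descFactorial_succ]; push_cast; ring
    have hEnat : (2*k+2).descFactorial (i+2)
        = (2*k+2 - (i+1)) * ((2*k+2 - i) * (2*k+2).descFactorial i) := by
      rw [Nat.descFactorial_succ, Nat.descFactorial_succ]
    have hEnat2 : (2*k+2).descFactorial (i+2) = (2*k+2)*((2*k+1)*((2*k).descFactorial i)) := by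
      have : 2*k+2 = (2*k+1)+1 := by ring
      rw [this, Nat.succ_descFactorial_succ, e4, Nat.succ_descFactorial_succ]
    have hE : ((2*(k:ℝ)+1) - i) * (((2*(k:ℝ)+2) - i) * ((2*k+2).descFactorial i))
        = (2*(k:ℝ)+2) * ((2*(k:ℝ)+1) * ((2*k).descFactorial i)) := by
      have := congrArg (Nat.cast (R := ℝ)) (hEnat.symm.trans hEnat2)
      push_cast [Nat.cast_sub (show i+1 ≤ 2*k+2 by omega), Nat.cast_sub (show i ≤ 2*k+2 by omega),
        Nat.cast_sub (show i ≤ 2*k+1 by omega)] at this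
      linear_combination this
    have hik : (i:ℝ) ≤ k := Nat.cast_le.mpr h
    have n1 : ((i.factorial : ℕ) : ℝ) ≠ 0 := Nat.cast_ne_zero.mpr (Nat.factorial_ne_zero _)
    have n2 : (((2*k).descFactorial i : ℕ) : ℝ) ≠ 0 := by
      simpa [Nat.descFactorial_eq_zero_iff_lt] using (by omega : ¬ (2*k < i))
    have n3 : (((2*k+2).descFactorial i : ℕ) : ℝ) ≠ 0 := by
      simpa [Nat.descFactorial_eq_zero_iff_lt] using (by omega : ¬ (2*k+2 < i))
    have p1 : (2*(k:ℝ)+1) - i ≠ 0 := by nlinarith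
    have p2 : (2*(k:ℝ)+2) - i ≠ 0 := by nlinarith
    have hA' : (((2*k).descFactorial i : ℕ) : ℝ)
        = ((2*(k:ℝ)+1) - i) * ((2*(k:ℝ)+2) - i) * ((2*k+2).descFactorial i)
          / ((2*(k:ℝ)+2) * (2*(k:ℝ)+1)) := by
      rw [eq_div_iff (by positivity)]
      linear_combination -hE
    have hfac : (((i+2).factorial : ℕ) : ℝ) = ((i:ℝ)+2)*((i:ℝ)+1)*(i.factorial : ℕ) := by
      rw [Nat.factorial_succ, Nat.factorial_succ]; push_cast; ring
    rw [bqc, bqc, bqc, hA, hB, hC, hD, hfac, hA']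
    have c2 : ((2:ℝ))^(i+2) = 4 * 2^i := by ring
    rw [c2]
    field_simp
    rw [eq_div_iff (mul_ne_zero (by convert p1 using 1; ring) (by convert p2 using 1; ring))]
    ring

lemma bq_rec (k : ℕ) :
    bq (k+2) = bq (k+1)
      + Polynomial.C (1 / ((2*(k:ℝ)+3) * (2*(k:ℝ)+1))) * (Polynomial.X ^ 2 * bq k) := by
  ext j
  rw [Polynomial.coeff_add, Polynomial.coeff_C_mul, Polynomial.coeff_X_pow_mul', bq_coeff,
    bq_coeff, bq_coeff]
  match j with
  | 0 =>
      simp [bqc]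
  | 1 =>
      have : bqc (k+2) 1 = bqc (k+1) 1 := by
        simp only [bqc, Nat.descFactorial_succ, Nat.descFactorial_zero]
        push_cast
        have h1 : (2*(k:ℝ)+4) ≠ 0 := by positivity
        have h2 : (2*(k:ℝ)+2) ≠ 0 := by positivity
        field_simp
        simp only [Nat.sub_zero]; push_cast; ring
      simpa using this
  | (i+2) =>
      rw [if_pos (by omega)]
      simpa using bqc_rec k i

noncomputable def eps : PowerSeries ℝ := PowerSeries.rescale (-1) (PowerSeries.exp ℝ)

lemma coeff_eps (s : ℕ) : PowerSeries.coeff s eps = (-1)^s / s.factorial := by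
  rw [eps, PowerSeries.coeff_rescale, PowerSeries.coeff_exp]
  rw [show ((1 : ℚ)/ s.factorial) = (s.factorial : ℚ)⁻¹ by ring, map_inv₀, map_natCast]
  rw [div_eq_mul_inv]

noncomputable def fc (k s : ℕ) : ℝ :=
  (-1)^(s+k) * ((k.factorial : ℝ) * 2^k / (2*k).factorial)
    * (∏ i ∈ Finset.range k, ((s:ℝ) - (2*i+1))) / s.factorial

lemma fact2_cast (k : ℕ) :
    (((2*(k+1)).factorial : ℕ) : ℝ) = (2*(k:ℝ)+2)*(2*(k:ℝ)+1)*((2*k).factorial : ℕ) := by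
  rw [show 2*(k+1) = (2*k+1)+1 by ring, Nat.factorial_succ, Nat.factorial_succ]
  push_cast; ring

lemma fc_zero (k : ℕ) : fc (k+1) 0 = fc k 0 := by
  unfold fc
  rw [Finset.prod_range_succ, fact2_cast, Nat.factorial_succ]
  have n1 : ((2*k).factorial : ℝ) ≠ 0 := Nat.cast_ne_zero.mpr (Nat.factorial_ne_zero _)
  have n2 : (2*(k:ℝ)+2) ≠ 0 := by positivity
  have n3 : (2*(k:ℝ)+1) ≠ 0 := by positivity
  push_cast
  field_simp
  ring

lemma fc_one {k : ℕ} (hk : 0 < k) : fc k 1 = 0 := by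
  unfold fc
  rw [Finset.prod_eq_zero (Finset.mem_range.mpr hk) (by norm_num)]
  simp

lemma fc_rec (k t : ℕ) :
    fc (k+2) (t+2) = fc (k+1) (t+2)
      + (1 / ((2*(k:ℝ)+3) * (2*(k:ℝ)+1))) * fc k t := by
  unfold fc
  have hp1 : (∏ i ∈ Finset.range (k+1), (((t+2:ℕ):ℝ) - (2*i+1)))
      = (∏ i ∈ Finset.range k, ((t:ℝ) - (2*i+1))) * ((t:ℝ)+1) := by
    rw [Finset.prod_range_succ']
    congr 1
    · exact Finset.prod_congr rfl fun i _ => by push_cast; ring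
    · push_cast; ring
  have hp2 : (∏ i ∈ Finset.range (k+2), (((t+2:ℕ):ℝ) - (2*i+1)))
      = (∏ i ∈ Finset.range k, ((t:ℝ) - (2*i+1))) * ((t:ℝ)+1) * ((t:ℝ) - (2*(k:ℝ)+1)) := by
    rw [Finset.prod_range_succ, hp1]
    push_cast; ring
  rw [hp1, hp2]
  have f1 : (((t+2).factorial : ℕ) : ℝ) = ((t:ℝ)+2)*((t:ℝ)+1)*(t.factorial : ℕ) := by
    rw [Nat.factorial_succ, Nat.factorial_succ]; push_cast; ring
  have f2 : (((k+2).factorial : ℕ) : ℝ) = ((k:ℝ)+2)*((k:ℝ)+1)*(k.factorial : ℕ) := by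
    rw [Nat.factorial_succ, Nat.factorial_succ]; push_cast; ring
  have f3 : (((k+1).factorial : ℕ) : ℝ) = ((k:ℝ)+1)*(k.factorial : ℕ) := by
    rw [Nat.factorial_succ]; push_cast; ring
  have f4 : (((2*(k+2)).factorial : ℕ) : ℝ)
      = (2*(k:ℝ)+4)*(2*(k:ℝ)+3)*((2*(k:ℝ)+2)*(2*(k:ℝ)+1)*((2*k).factorial : ℕ)) := by
    rw [show k+2 = (k+1)+1 by ring, fact2_cast (k+1), fact2_cast k]
    push_cast; ring
  rw [f1, f2, f3, f4, fact2_cast]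
  have n1 : ((2*k).factorial : ℝ) ≠ 0 := Nat.cast_ne_zero.mpr (Nat.factorial_ne_zero _)
  have n0 : ((t:ℕ).factorial : ℝ) ≠ 0 := Nat.cast_ne_zero.mpr (Nat.factorial_ne_zero _)
  have n2 : (2*(k:ℝ)+2) ≠ 0 := by positivity
  have n3 : (2*(k:ℝ)+1) ≠ 0 := by positivity
  have n4 : (2*(k:ℝ)+3) ≠ 0 := by positivity
  have n5 : (2*(k:ℝ)+4) ≠ 0 := by positivity
  have n6 : ((t:ℝ)+1) ≠ 0 := by positivity
  have n7 : ((t:ℝ)+2) ≠ 0 := by positivity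
  field_simp
  ring

lemma bq_zero : bq 0 = 1 := by
  simp [bq, bqc]

lemma bq_one : bq 1 = 1 + Polynomial.X := by
  rw [bq, Finset.sum_range_succ, Finset.sum_range_one]
  norm_num [bqc]

lemma fval : ∀ k : ℕ, ∀ s : ℕ,
    PowerSeries.coeff s (eps * (bq k : PowerSeries ℝ)) = fc k s := by
  intro k
  induction k using Nat.strong_induction_on with
  | _ k ih =>
    match k with
    | 0 =>
      intro s
      rw [bq_zero]
      push_cast
      rw [mul_one, coeff_eps]
      simp [fc]
    | 1 =>
      intro s
      rw [bq_one]
      push_cast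
      rw [mul_add, mul_one, map_add, coeff_eps]
      match s with
      | 0 => simp [fc, PowerSeries.coeff_zero_mul_X]
      | (t+1) =>
        rw [PowerSeries.coeff_succ_mul_X, coeff_eps, fc]
        have f1 : (((t+1).factorial : ℕ) : ℝ) = ((t:ℝ)+1)*(t.factorial : ℕ) := by
          rw [Nat.factorial_succ]; push_cast; ring
        have n0 : ((t:ℕ).factorial : ℝ) ≠ 0 := Nat.cast_ne_zero.mpr (Nat.factorial_ne_zero _)
        have n6 : ((t:ℝ)+1) ≠ 0 := by positivity
        rw [Finset.prod_range_one, f1]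
        push_cast
        field_simp
        ring
    | (k+2) =>
      intro s
      rw [bq_rec k]
      push_cast
      have hre : eps * ((bq (k+1) : PowerSeries ℝ)
          + PowerSeries.C (1 / ((2*(k:ℝ)+3) * (2*(k:ℝ)+1)))
            * (PowerSeries.X ^ 2 * (bq k : PowerSeries ℝ)))
          = eps * (bq (k+1) : PowerSeries ℝ)
            + PowerSeries.C (1 / ((2*(k:ℝ)+3) * (2*(k:ℝ)+1)))
              * (PowerSeries.X ^ 2 * (eps * (bq k : PowerSeries ℝ))) := by
        ring
      rw [hre, map_add, PowerSeries.coeff_C_mul, PowerSeries.coeff_X_pow_mul',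
        ih (k+1) (by omega) s]
      match s with
      | 0 =>
        rw [if_neg (by omega)]
        simp [fc_zero]
      | 1 =>
        rw [if_neg (by omega)]
        rw [fc_one (by omega), fc_one (by omega)]
        simp
      | (t+2) =>
        rw [if_pos (by omega), ih k (by omega) (t+2-2)]
        have : t+2-2 = t := by omega
        rw [this, fc_rec]

lemma fc_odd_vanish {k j : ℕ} (h : j < k) : fc k (2*j+1) = 0 := by
  unfold fc
  rw [Finset.prod_eq_zero (Finset.mem_range.mpr h) (by push_cast; ring)]
  simp

lemma fc_self_ne (j : ℕ) : fc j (2*j+1) ≠ 0 := by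
  unfold fc
  have hp : (∏ i ∈ Finset.range j, (((2*j+1:ℕ):ℝ) - (2*i+1))) ≠ 0 := by
    refine Finset.prod_ne_zero_iff.mpr fun i hi => ?_
    have hij : (i:ℝ) < j := by exact_mod_cast Finset.mem_range.mp hi
    push_cast
    nlinarith
  have n0 : (((2*j+1:ℕ)).factorial : ℝ) ≠ 0 := Nat.cast_ne_zero.mpr (Nat.factorial_ne_zero _)
  have n1 : ((j.factorial : ℕ) : ℝ) ≠ 0 := Nat.cast_ne_zero.mpr (Nat.factorial_ne_zero _)
  have n2 : (((2*j).factorial : ℕ) : ℝ) ≠ 0 := Nat.cast_ne_zero.mpr (Nat.factorial_ne_zero _)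
  have n3 : ((-1:ℝ))^(2*j+1+j) ≠ 0 := by
    exact pow_ne_zero _ (by norm_num)
  have n4 : ((2:ℝ))^j ≠ 0 := by positivity
  exact div_ne_zero (mul_ne_zero (mul_ne_zero n3 (div_ne_zero (mul_ne_zero n1 n4) n2)) hp) n0

lemma coe_comp_C_mul_X (Q : Polynomial ℝ) (r : ℝ) :
    ((Q.comp (Polynomial.C r * Polynomial.X) : Polynomial ℝ) : PowerSeries ℝ)
      = PowerSeries.rescale r (Q : PowerSeries ℝ) := by
  ext s
  rw [PowerSeries.coeff_rescale, Polynomial.coeff_coe, Polynomial.coeff_coe]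
  induction Q using Polynomial.induction_on' with
  | add p q hp hq => simp [hp, hq, mul_add]
  | monomial n c =>
    rw [← Polynomial.C_mul_X_pow_eq_monomial, Polynomial.mul_comp, Polynomial.C_comp,
      Polynomial.pow_comp, Polynomial.X_comp, mul_pow, ← Polynomial.C_pow]
    simp only [Polynomial.coeff_C_mul, Polynomial.coeff_X_pow]
    split_ifs with h
    · subst h; ring
    · ring

lemma heps (a : ℝ) :
    (PowerSeries.rescale a eps) * (PowerSeries.rescale (1-a) eps) = eps := by
  rw [eps, PowerSeries.rescale_rescale, PowerSeries.rescale_rescale,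
    show (-1 : ℝ) * a = -a by ring, show (-1 : ℝ) * (1-a) = -(1-a) by ring,
    PowerSeries.exp_mul_exp_eq_exp_add, show -a + -(1-a) = (-1:ℝ) by ring]

theorem bessel_vanish (n m : ℕ) (a : ℝ) (β : ℕ → ℝ)
    (hβ : ∀ u : ℝ, besselQ n (a * u) * besselQ m ((1 - a) * u) =
      ∑ k ∈ Finset.range (n + m + 1), β k * besselQ k u)
    (k : ℕ) (hk : k < min n m) :
    β k = 0 := by
  have hPS : (bq n).comp (Polynomial.C a * Polynomial.X)
        * (bq m).comp (Polynomial.C (1-a) * Polynomial.X)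
      = ∑ i ∈ Finset.range (n+m+1), Polynomial.C (β i) * bq i := by
    apply Polynomial.funext
    intro u
    simp only [Polynomial.eval_mul, Polynomial.eval_comp, Polynomial.eval_C, Polynomial.eval_X,
      Polynomial.eval_finset_sum, bq_eval]
    exact hβ u
  have hS : ∀ s : ℕ, PowerSeries.coeff s
      (eps * ((∑ i ∈ Finset.range (n+m+1), Polynomial.C (β i) * bq i : Polynomial ℝ) : PowerSeries ℝ))
      = ∑ i ∈ Finset.range (n+m+1), β i * fc i s := by
    intro s
    rw [← Polynomial.coeToPowerSeries.ringHom_apply, map_sum, Finset.mul_sum, map_sum]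
    refine Finset.sum_congr rfl fun i _ => ?_
    have hcoe : Polynomial.coeToPowerSeries.ringHom (Polynomial.C (β i) * bq i)
        = PowerSeries.C (β i) * (bq i : PowerSeries ℝ) := by
      rw [Polynomial.coeToPowerSeries.ringHom_apply, Polynomial.coe_mul, Polynomial.coe_C]
    rw [hcoe, mul_left_comm, PowerSeries.coeff_C_mul, fval]
  have hP : ∀ j, j < min n m → PowerSeries.coeff (2*j+1)
      (eps * (((bq n).comp (Polynomial.C a * Polynomial.X)
        * (bq m).comp (Polynomial.C (1-a) * Polynomial.X) : Polynomial ℝ) : PowerSeries ℝ)) = 0 := by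
    intro j hj
    rw [Polynomial.coe_mul, coe_comp_C_mul_X, coe_comp_C_mul_X, ← heps a]
    have hre : (PowerSeries.rescale a eps * PowerSeries.rescale (1-a) eps)
          * (PowerSeries.rescale a (bq n : PowerSeries ℝ)
            * PowerSeries.rescale (1-a) (bq m : PowerSeries ℝ))
        = (PowerSeries.rescale a (eps * (bq n : PowerSeries ℝ)))
          * (PowerSeries.rescale (1-a) (eps * (bq m : PowerSeries ℝ))) := by
      rw [map_mul, map_mul]; ring
    rw [hre, PowerSeries.coeff_mul]
    apply Finset.sum_eq_zero
    intro p hp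
    have hsum : p.1 + p.2 = 2*j+1 := Finset.HasAntidiagonal.mem_antidiagonal.mp hp
    rw [PowerSeries.coeff_rescale, PowerSeries.coeff_rescale, fval, fval]
    rcases Nat.even_or_odd p.1 with he | ho
    · have h1 : p.1 % 2 = 0 := Nat.even_iff.mp he
      set t := p.2 / 2 with htdef
      have ht : p.2 = 2*t+1 := by omega
      have htm : t < m := by omega
      rw [ht, fc_odd_vanish htm, mul_zero, mul_zero]
    · have h1 : p.1 % 2 = 1 := Nat.odd_iff.mp ho
      set t := p.1 / 2 with htdef
      have ht : p.1 = 2*t+1 := by omega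
      have htn : t < n := by omega
      rw [ht, fc_odd_vanish htn, mul_zero, zero_mul]
  have hz : ∀ j, j < min n m → ∑ i ∈ Finset.range (n+m+1), β i * fc i (2*j+1) = 0 := by
    intro j hj
    rw [← hS (2*j+1), ← hPS]
    exact hP j hj
  clear hβ hPS hS hP
  induction k using Nat.strong_induction_on with
  | _ k ih =>
    have h0 := hz k hk
    rw [Finset.sum_eq_single k] at h0
    · exact (mul_eq_zero.mp h0).resolve_right (fc_self_ne k)
    · intro i hi hne
      rcases lt_or_gt_of_ne hne with hlt | hgt
      · rw [ih i hlt (lt_trans hlt hk), zero_mul]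
      · rw [fc_odd_vanish hgt, mul_zero]
    · intro hni
      exact absurd (Finset.mem_range.mpr (by omega)) hni

theorem bessel_linearization_vanishing
    (n m : ℕ) (a : ℝ) (β : ℕ → ℝ)
    (hβ : ∀ u : ℝ, besselQ n (a * u) * besselQ m ((1 - a) * u) =
      ∑ k ∈ Finset.range (n + m + 1), β k * besselQ k u)
    (k : ℕ) (hk : k < min n m) :
    β k = 0 := by
  exact bessel_vanish n m a β hβ k hk
end

section
/- (Recurrence of Berg–Vignat) Let n, m ≥ 1 be natural numbers and a a real number. Then β_0^{(n,m)}(a) = 0, and for every k with 0 ≤ k ≤ n+m−1, (1/(2k+1)) · β_{k+1}^{(n,m)}(a) = (a²/(2n−1)) · β_k^{(n−1,m)}(a) + ((1−a)²/(2m−1)) · β_k^{(n,m−1)}(a). -/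
open Finset

open Polynomial

/-- The coefficient of the Bessel polynomial. -/
noncomputable def bc (n k : ℕ) : ℝ :=
  ((n.factorial : ℝ) * (2 * n - k).factorial * 2 ^ k) /
      ((2 * n).factorial * (n - k).factorial * k.factorial)

lemma bc_zero (n : ℕ) : bc n 0 = 1 := by
  unfold bc
  rw [Nat.sub_zero, Nat.sub_zero, pow_zero, Nat.factorial_zero]
  push_cast
  rw [mul_one, mul_one, mul_comm]
  rw [div_self (by positivity)]

lemma bc_one (n : ℕ) (hn : 1 ≤ n) : bc n 1 = 1 := by
  obtain ⟨p, rfl⟩ : ∃ p, n = p + 1 := ⟨n - 1, by omega⟩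
  unfold bc
  have h1 : 2 * (p + 1) - 1 = 2*p + 1 := by omega
  have h2 : 2 * (p + 1) = 2*p + 1 + 1 := by omega
  have h3 : p + 1 - 1 = p := by omega
  rw [h1, h2, h3]
  simp only [Nat.factorial_succ, Nat.factorial_one, pow_one]
  have f1 : ((2*p+1).factorial : ℝ) ≠ 0 := by positivity
  have f2 : ((p).factorial : ℝ) ≠ 0 := by positivity
  push_cast
  field_simp
  ring

lemma bc_diag (p : ℕ) :
    bc (p+1) (p+1) = (1/(2*(p:ℝ)+1)) * bc p p := by
  unfold bc
  have h1 : 2 * (p + 1) - (p+1) = p + 1 := by omega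
  have h2 : 2 * (p + 1) = 2*p + 1 + 1 := by omega
  have h3 : p + 1 - (p+1) = 0 := by omega
  have h4 : 2 * p - p = p := by omega
  have h5 : p - p = 0 := by omega
  rw [h1, h2, h3, h4, h5]
  simp only [Nat.factorial_succ, Nat.factorial_zero, pow_succ]
  have f1 : ((2*p).factorial : ℝ) ≠ 0 := by positivity
  have f2 : ((p).factorial : ℝ) ≠ 0 := by positivity
  have f3 : (2*(p:ℝ)+1) ≠ 0 := by positivity
  push_cast
  field_simp
  ring

lemma bc_diag_ne (n : ℕ) : bc n n ≠ 0 := by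
  unfold bc
  have h1 : 2 * n - n = n := by omega
  rw [h1, Nat.sub_self, Nat.factorial_zero]
  push_cast
  positivity

set_option maxHeartbeats 2000000 in
lemma bc_rec (n k : ℕ) (h1 : 1 ≤ k) (h2 : k < n) :
    bc n k = bc n (k+1) * ((k:ℝ)+1) + (1/(2*(n:ℝ)-1)) * bc (n-1) (k-1) := by
  obtain ⟨p, rfl⟩ : ∃ p, k = p + 1 := ⟨k - 1, by omega⟩
  obtain ⟨q, rfl⟩ : ∃ q, n = p + q + 2 := ⟨n - p - 2, by omega⟩
  unfold bc
  have e1 : 2 * (p + q + 2) - (p + 1) = p + 2*q + 2 + 1 := by omega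
  have e3 : 2 * (p + q + 2) - (p + 1 + 1) = p + 2*q + 2 := by omega
  have e2 : p + q + 2 - (p + 1) = q + 1 := by omega
  have e4 : p + q + 2 - (p + 1 + 1) = q := by omega
  have e5 : p + q + 2 - 1 = p + q + 1 := by omega
  have e8 : p + 1 - 1 = p := by omega
  have e6 : 2 * (p + q + 1) - p = p + 2*q + 2 := by omega
  have e7 : p + q + 1 - p = q + 1 := by omega
  have e9 : 2 * (p + q + 2) = 2*p + 2*q + 2 + 1 + 1 := by omega
  have e10 : 2 * (p + q + 1) = 2*p + 2*q + 2 := by omega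
  have g1 : (p + q + 2) = (p + q + 1) + 1 := by omega
  rw [e8]
  rw [e1, e2, e3, e4, e5, e6, e7]
  rw [e9, e10, g1]
  simp only [Nat.factorial_succ, pow_succ]
  push_cast
  have hcast : 2 * ((p:ℝ) + (q:ℝ) + 1 + 1) - 1 = 2*(p:ℝ)+2*(q:ℝ)+3 := by ring
  rw [hcast]
  have f1 : ((2*p+2*q+2).factorial : ℝ) ≠ 0 := by positivity
  have f2 : ((p+2*q+2).factorial : ℝ) ≠ 0 := by positivity
  have f3 : ((q).factorial : ℝ) ≠ 0 := by positivity
  have f4 : ((p).factorial : ℝ) ≠ 0 := by positivity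
  have f5 : ((p+q+1).factorial : ℝ) ≠ 0 := by positivity
  have g2 : ((p:ℝ)+1) ≠ 0 := by positivity
  have g3 : ((q:ℝ)+1) ≠ 0 := by positivity
  have g4 : ((p:ℝ)+1+1) ≠ 0 := by positivity
  have g5 : (2*(p:ℝ)+2*(q:ℝ)+3) ≠ 0 := by positivity
  have g6 : (2*(p:ℝ)+2*(q:ℝ)+2+1) ≠ 0 := by positivity
  have g7 : (2*(p:ℝ)+2*(q:ℝ)+2+1+1) ≠ 0 := by positivity
  have g8 : ((p:ℝ)+2*(q:ℝ)+2+1) ≠ 0 := by positivity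
  field_simp
  ring

/-- The Bessel polynomial as a `Polynomial ℝ`. -/
noncomputable def QP (n : ℕ) : Polynomial ℝ :=
  ∑ k ∈ Finset.range (n + 1), Polynomial.C (bc n k) * Polynomial.X ^ k

lemma QP_eval (n : ℕ) (u : ℝ) : (QP n).eval u = besselQ n u := by
  simp only [QP, besselQ, bc, eval_finset_sum, eval_mul, eval_pow, eval_C, eval_X]

lemma QP_coeff (n k : ℕ) : (QP n).coeff k = if k ≤ n then bc n k else 0 := by
  rw [QP, finset_sum_coeff]
  simp only [coeff_C_mul, coeff_X_pow]
  by_cases h : k ≤ n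
  · rw [if_pos h, Finset.sum_eq_single_of_mem k (by simp; omega)]
    · simp
    · intro b _ hb
      simp [Ne.symm hb]
  · rw [if_neg h]
    apply Finset.sum_eq_zero
    intro j hj
    simp only [mem_range] at hj
    have : k ≠ j := by omega
    simp [this]

lemma QP_zero : QP 0 = 1 := by
  simp [QP, bc_zero]

lemma QP_deriv (n : ℕ) :
    QP (n+1) = derivative (QP (n+1)) + C (1/(2*(n:ℝ)+1)) * (X * QP n) := by
  ext k
  rw [coeff_add, coeff_derivative, coeff_C_mul]
  match k with
  | 0 =>
    rw [Polynomial.mul_coeff_zero, coeff_X_zero, zero_mul, mul_zero, add_zero]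
    rw [QP_coeff, QP_coeff, if_pos (by omega), if_pos (by omega)]
    rw [bc_zero, bc_one _ (by omega)]
    norm_num
  | (j+1) =>
    rw [coeff_X_mul]
    rw [QP_coeff, QP_coeff, QP_coeff]
    rcases lt_trichotomy (j+1) (n+1) with hlt | heq | hgt
    · rw [if_pos (by omega), if_pos (by omega), if_pos (by omega)]
      have h := bc_rec (n+1) (j+1) (by omega) (by omega)
      simp only [Nat.add_sub_cancel] at h
      have c1 : 2*(((n:ℕ)+1:ℕ):ℝ)-1 = 2*(n:ℝ)+1 := by push_cast; ring
      rw [c1] at h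
      push_cast at h ⊢
      linear_combination h
    · obtain rfl : j = n := by omega
      rw [if_pos (by omega), if_neg (by omega), if_pos (by omega)]
      rw [zero_mul, zero_add]
      push_cast
      linear_combination bc_diag j
    · rw [if_neg (by omega), if_neg (by omega), if_neg (by omega)]
      simp

lemma QP_star (c : ℝ) (n : ℕ) :
    C c * (QP (n+1)).comp (C c * X)
      = derivative ((QP (n+1)).comp (C c * X))
        + C (c^2 * (1/(2*(n:ℝ)+1))) * (X * (QP n).comp (C c * X)) := by
  have hD : derivative ((QP (n+1)).comp (C c * X))
      = C c * (derivative (QP (n+1))).comp (C c * X) := by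
    rw [derivative_comp]
    simp [derivative_C_mul]
  conv_lhs => rw [QP_deriv n]
  rw [add_comp, mul_comp, mul_comp, C_comp, X_comp, hD]
  rw [show (c^2 * (1/(2*(n:ℝ)+1))) = c * (1/(2*(n:ℝ)+1)) * c by ring]
  rw [C_mul, C_mul]
  ring

lemma QP_indep : ∀ (N : ℕ) (d : ℕ → ℝ),
    (∑ j ∈ Finset.range N, C (d j) * QP j) = 0 → ∀ j, j < N → d j = 0 := by
  intro N
  induction N with
  | zero => intro d _ j hj; omega
  | succ N ih =>
    intro d h j hj
    have hN : d N = 0 := by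
      have h0 := congrArg (fun p : Polynomial ℝ => p.coeff N) h
      simp only [finset_sum_coeff, coeff_C_mul, coeff_zero] at h0
      rw [Finset.sum_eq_single_of_mem N (by simp)] at h0
      · rw [QP_coeff, if_pos le_rfl] at h0
        rcases mul_eq_zero.mp h0 with h' | h'
        · exact h'
        · exact absurd h' (bc_diag_ne N)
      · intro b hb hbN
        simp only [mem_range] at hb
        rw [QP_coeff, if_neg (by omega), mul_zero]
    have hrest : (∑ j ∈ Finset.range N, C (d j) * QP j) = 0 := by
      have := h
      rw [Finset.sum_range_succ, hN] at this
      simpa using this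
    rcases Nat.lt_succ_iff_lt_or_eq.mp hj with h' | h'
    · exact ih d hrest j h'
    · subst h'; exact hN

theorem bessel_linearization_recurrence
    (n m : ℕ) (hn : 1 ≤ n) (hm : 1 ≤ m) (a : ℝ)
    (β βn βm : ℕ → ℝ)
    (hβ : ∀ u : ℝ, besselQ n (a * u) * besselQ m ((1 - a) * u) =
      ∑ k ∈ Finset.range (n + m + 1), β k * besselQ k u)
    (hβn : ∀ u : ℝ, besselQ (n - 1) (a * u) * besselQ m ((1 - a) * u) =
      ∑ k ∈ Finset.range ((n - 1) + m + 1), βn k * besselQ k u)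
    (hβm : ∀ u : ℝ, besselQ n (a * u) * besselQ (m - 1) ((1 - a) * u) =
      ∑ k ∈ Finset.range (n + (m - 1) + 1), βm k * besselQ k u) :
    β 0 = 0 ∧
    ∀ k : ℕ, k ≤ n + m - 1 →
      (1 / (2 * (k : ℝ) + 1)) * β (k + 1) =
        (a ^ 2 / (2 * (n : ℝ) - 1)) * βn k + ((1 - a) ^ 2 / (2 * (m : ℝ) - 1)) * βm k := by
  rcases n with _ | n
  · omega
  rcases m with _ | m
  · omega
  clear hn hm
  simp only [Nat.add_sub_cancel] at hβn hβm
  have r1 : n + 1 + (m + 1) + 1 = n + m + 2 + 1 := by omega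
  have r2 : n + (m + 1) + 1 = n + m + 2 := by omega
  have r3 : n + 1 + m + 1 = n + m + 2 := by omega
  simp only [r1] at hβ
  simp only [r2] at hβn
  simp only [r3] at hβm
  set b : ℝ := 1 - a with hb
  set A : Polynomial ℝ := (QP (n+1)).comp (C a * X) with hA
  set B : Polynomial ℝ := (QP (m+1)).comp (C b * X) with hBdef
  set GA : Polynomial ℝ := (QP n).comp (C a * X) with hGA
  set HB : Polynomial ℝ := (QP m).comp (C b * X) with hHB
  have hF : A * B = ∑ k ∈ Finset.range (n+m+2+1), C (β k) * QP k := by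
    apply Polynomial.funext; intro u
    simpa only [hA, hBdef, eval_mul, eval_comp, eval_C, eval_X, QP_eval, eval_finset_sum]
      using hβ u
  have hG : GA * B = ∑ k ∈ Finset.range (n+m+2), C (βn k) * QP k := by
    apply Polynomial.funext; intro u
    simpa only [hGA, hBdef, eval_mul, eval_comp, eval_C, eval_X, QP_eval, eval_finset_sum]
      using hβn u
  have hH : A * HB = ∑ k ∈ Finset.range (n+m+2), C (βm k) * QP k := by
    apply Polynomial.funext; intro u
    simpa only [hA, hHB, eval_mul, eval_comp, eval_C, eval_X, QP_eval, eval_finset_sum]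
      using hβm u
  have hstarA : C a * A = derivative A + C (a^2 * (1/(2*(n:ℝ)+1))) * (X * GA) :=
    QP_star a n
  have hstarB : C b * B = derivative B + C (b^2 * (1/(2*(m:ℝ)+1))) * (X * HB) :=
    QP_star b m
  have hab : (C a : Polynomial ℝ) + C b = 1 := by
    rw [← C_add, hb]; norm_num
  have hprod : A*B - derivative (A*B) =
      X * (C (a^2 * (1/(2*(n:ℝ)+1))) * (GA * B) + C (b^2 * (1/(2*(m:ℝ)+1))) * (A * HB)) := by
    rw [derivative_mul]
    linear_combination B * hstarA + A * hstarB - A*B*hab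
  have h0 : C (β 0) * QP 0 - derivative (C (β 0) * QP 0) = C (β 0) := by
    simp [QP_zero]
  have hsucc : ∀ i : ℕ, C (β (i+1)) * QP (i+1) - derivative (C (β (i+1)) * QP (i+1))
      = X * (C (β (i+1) * (1/(2*(i:ℝ)+1))) * QP i) := by
    intro i
    rw [derivative_C_mul, C_mul]
    linear_combination C (β (i+1)) * QP_deriv i
  have hFd : A*B - derivative (A*B) =
      C (β 0) + X * ∑ j ∈ Finset.range (n+m+2), C (β (j+1) * (1/(2*(j:ℝ)+1))) * QP j := by
    rw [hF, derivative_sum, ← Finset.sum_sub_distrib, Finset.sum_range_succ']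
    simp only [hsucc, h0]
    rw [← Finset.mul_sum, add_comm]
  have hS : C (a^2 * (1/(2*(n:ℝ)+1))) * (GA*B) + C (b^2 * (1/(2*(m:ℝ)+1))) * (A*HB)
      = ∑ j ∈ Finset.range (n+m+2),
          C (a^2 * (1/(2*(n:ℝ)+1)) * βn j + b^2 * (1/(2*(m:ℝ)+1)) * βm j) * QP j := by
    rw [hG, hH, Finset.mul_sum, Finset.mul_sum, ← Finset.sum_add_distrib]
    refine Finset.sum_congr rfl fun j _ => ?_
    simp only [C_add, C_mul]
    ring
  have key : C (β 0) + X * ∑ j ∈ Finset.range (n+m+2), C (β (j+1) * (1/(2*(j:ℝ)+1))) * QP j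
      = X * ∑ j ∈ Finset.range (n+m+2),
          C (a^2 * (1/(2*(n:ℝ)+1)) * βn j + b^2 * (1/(2*(m:ℝ)+1)) * βm j) * QP j := by
    rw [← hFd, hprod, hS]
  have hβ0 : β 0 = 0 := by
    have h0' := congrArg (fun p : Polynomial ℝ => p.coeff 0) key
    simpa [Polynomial.mul_coeff_zero] using h0'
  have hXX : X * (∑ j ∈ Finset.range (n+m+2), C (β (j+1) * (1/(2*(j:ℝ)+1))) * QP j)
      = X * ∑ j ∈ Finset.range (n+m+2),
          C (a^2 * (1/(2*(n:ℝ)+1)) * βn j + b^2 * (1/(2*(m:ℝ)+1)) * βm j) * QP j := by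
    rw [hβ0] at key
    simpa using key
  have hS12 := mul_left_cancel₀ (Polynomial.X_ne_zero) hXX
  have hz : ∑ j ∈ Finset.range (n+m+2),
      C ((β (j+1) * (1/(2*(j:ℝ)+1))) -
        (a^2 * (1/(2*(n:ℝ)+1)) * βn j + b^2 * (1/(2*(m:ℝ)+1)) * βm j)) * QP j = 0 := by
    simp only [C_sub, sub_mul, Finset.sum_sub_distrib, hS12, sub_self]
  have hind := QP_indep (n+m+2) _ hz
  refine ⟨hβ0, ?_⟩
  intro k hk
  have hk' : k < n+m+2 := by omega
  have h := hind k hk'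
  push_cast
  rw [show (2*((n:ℝ)+1)-1) = 2*(n:ℝ)+1 by ring, show (2*((m:ℝ)+1)-1) = 2*(m:ℝ)+1 by ring]
  linear_combination h
end

section
/- For all natural numbers n, m, every real number a, and every i with 0 ≤ i ≤ n+m, the linearization coefficient admits the double-sum expression β_i^{(n,m)}(a) = Σ_{k=i}^{n+m} δ_i^{(k)} Σ_{j=0}^{k} α_j^{(n)} α_{k−j}^{(m)} a^j (1−a)^{k−j}, where α_j^{(n)} = (n! (2n−j)! 2^j)/((2n)! (n−j)! j!) for 0 ≤ j ≤ n and α_j^{(n)} = 0 for j > n, and where δ_i^{(k)} = ((k+1)!/2^k) · (−1)^{k−i} (2i)! / ((k−i)! · i! · (2i+1−k)!) if (k−1)/2 ≤ i ≤ k and δ_i^{(k)} = 0 otherwise. -/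
open Finset

/-- The coefficients `α_j^{(n)}` of the Bessel polynomial `q_n`, extended by zero for `j > n`. -/
noncomputable def besselCoeff (n j : ℕ) : ℝ :=
  if j ≤ n then
    ((n.factorial : ℝ) * (2 * n - j).factorial * 2 ^ j) /
      ((2 * n).factorial * (n - j).factorial * j.factorial)
  else 0

/-- The Carlitz connection coefficients `δ_i^{(k)}`. -/
noncomputable def carlitzDelta (i k : ℕ) : ℝ :=
  if i ≤ k ∧ k ≤ 2 * i + 1 then
    ((k + 1).factorial / 2 ^ k : ℝ) *
      ((-1 : ℝ) ^ (k - i) * (2 * i).factorial /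
        ((k - i).factorial * i.factorial * (2 * i + 1 - k).factorial))
  else 0

lemma fne (n : ℕ) : (n.factorial : ℝ) ≠ 0 := by
  exact_mod_cast n.factorial_ne_zero

lemma fs (n : ℕ) : ((n+1).factorial : ℝ) = (n+1) * n.factorial := by
  rw [Nat.factorial_succ]; push_cast; ring

lemma tpne (x : ℝ) (n : ℕ) (hx : x ≠ 0) : x ^ n ≠ 0 := pow_ne_zero n hx

lemma coeffRec (i j : ℕ) :
    (if 2 ≤ j then besselCoeff i (j - 2) else 0) =
    ((2*i+1)*(2*i+3) : ℝ) * (besselCoeff (i+2) j - besselCoeff (i+1) j) := by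
  match j with
  | 0 =>
    rw [if_neg (by omega)]
    unfold besselCoeff
    rw [if_pos (by omega), if_pos (by omega)]
    rw [show 2*(i+2) - 0 = 2*(i+2) by omega, show (i+2) - 0 = i+2 by omega,
        show 2*(i+1) - 0 = 2*(i+1) by omega, show (i+1) - 0 = i+1 by omega]
    field_simp
    ring
  | 1 =>
    rw [if_neg (by omega)]
    unfold besselCoeff
    rw [if_pos (by omega), if_pos (by omega)]
    rw [show 2*(i+2) - 1 = 2*i+1+1+1 by omega, show (i+2) - 1 = i+1 from rfl,
        show 2*(i+2) = 2*i+1+1+1+1 by omega,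
        show 2*(i+1) - 1 = 2*i+1 by omega, show (i+1) - 1 = i from rfl,
        show 2*(i+1) = 2*i+1+1 by omega]
    field_simp [fne]
    simp only [fs]
    push_cast
    ring
  | (j'+2) =>
    rw [if_pos (by omega), show j'+2-2 = j' by omega]
    rcases lt_trichotomy j' i with h | h | h
    · obtain ⟨q, rfl⟩ : ∃ q, i = j' + q + 1 := ⟨i - j' - 1, by omega⟩
      unfold besselCoeff
      rw [if_pos (by omega), if_pos (by omega), if_pos (by omega)]
      rw [show 2*(j'+q+1) - j' = j'+(2*q)+1+1 by omega,
          show (j'+q+1) - j' = q+1 by omega,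
          show 2*(j'+q+1) = 2*j'+(2*q)+1+1 by omega,
          show 2*(j'+q+1+2) - (j'+2) = j'+(2*q)+1+1+1+1 by omega,
          show (j'+q+1+2) - (j'+2) = q+1 by omega,
          show 2*(j'+q+1+2) = 2*j'+(2*q)+1+1+1+1+1+1 by omega,
          show 2*(j'+q+1+1) - (j'+2) = j'+(2*q)+1+1 by omega,
          show (j'+q+1+1) - (j'+2) = q by omega,
          show 2*(j'+q+1+1) = 2*j'+(2*q)+1+1+1+1 by omega,
          show j'+q+1+2 = j'+q+1+1+1 from rfl,
          show j'+2 = j'+1+1 from rfl]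
      field_simp [fne]
      simp only [fs]
      push_cast
      ring
    · subst h
      unfold besselCoeff
      rw [if_pos (le_refl j'), if_pos (le_refl (j'+2)), if_neg (by omega)]
      rw [show 2*j' - j' = j' by omega, show j' - j' = 0 by omega,
          show 2*(j'+2) - (j'+2) = j'+1+1 by omega, show (j'+2) - (j'+2) = 0 by omega,
          show 2*(j'+2) = 2*j'+1+1+1+1 by omega]
      rw [show j'+2 = j'+1+1 from rfl]
      field_simp [fne]
      simp only [fs]
      push_cast
      ring
    · unfold besselCoeff
      rw [if_neg (by omega), if_neg (by omega), if_neg (by omega)]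
      ring

lemma delta0 (k : ℕ) : carlitzDelta 0 (k+2) = 0 := by
  unfold carlitzDelta; rw [if_neg (by omega)]

lemma delta1 (k : ℕ) : carlitzDelta 1 (k+2) = -(3 : ℝ) * carlitzDelta 0 k := by
  unfold carlitzDelta
  match k with
  | 0 =>
    rw [if_pos (by omega), if_pos (by omega)]
    norm_num [Nat.factorial]
  | 1 =>
    rw [if_pos (by omega), if_pos (by omega)]
    norm_num [Nat.factorial]
  | (k+2) =>
    rw [if_neg (by omega), if_neg (by omega)]; ring

lemma deltaRec (i k : ℕ) :
    carlitzDelta (i+2) (k+2) =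
      ((2*i+1)*(2*i+3) : ℝ) * carlitzDelta i k
      - ((2*i+3)*(2*i+5) : ℝ) * carlitzDelta (i+1) k := by
  unfold carlitzDelta
  rcases lt_or_ge k i with h | h
  · rw [if_neg (by omega), if_neg (by omega), if_neg (by omega)]; ring
  rcases lt_or_ge (2*i+3) k with h2 | h2
  · rw [if_neg (by omega), if_neg (by omega), if_neg (by omega)]; ring
  rcases eq_or_lt_of_le h with rfl | hik
  · -- k = i
    rw [if_pos (by omega), if_pos (by omega), if_neg (by omega)]
    rw [show i+2-(i+2) = 0 by omega, show i-i = 0 by omega,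
        show 2*(i+2)+1-(i+2) = i+1+1+1 by omega, show 2*i+1-i = i+1 by omega,
        show 2*(i+2) = 2*i+1+1+1+1 by omega,
        show i+2+1 = i+1+1+1 from rfl, show i+2 = i+1+1 from rfl]
    field_simp [fne]
    simp only [fs]
    push_cast
    ring
  rcases eq_or_lt_of_le h2 with rfl | hk2
  · -- k = 2i+3
    rw [if_pos (by omega), if_neg (by omega), if_pos (by omega)]
    rw [show 2*i+3+2-(i+2) = i+1+1+1 by omega, show 2*i+3-(i+1) = i+1+1 by omega,
        show 2*(i+2)+1-(2*i+3+2) = 0 by omega, show 2*(i+1)+1-(2*i+3) = 0 by omega,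
        show 2*(i+2) = 2*i+1+1+1+1 by omega, show 2*(i+1) = 2*i+1+1 by omega,
        show 2*i+3+2+1 = 2*i+1+1+1+1+1+1 by omega, show 2*i+3+1 = 2*i+1+1+1+1 by omega,
        show i+2 = i+1+1 from rfl, show 2*i+3+2 = 2*i+1+1+1+1+1 by omega,
        show 2*i+3 = 2*i+1+1+1 by omega]
    field_simp [fne]
    simp only [fs]
    push_cast
    ring
  rcases eq_or_lt_of_le (by omega : k ≤ 2*i+2) with rfl | hk1
  · -- k = 2i+2
    rw [if_pos (by omega), if_neg (by omega), if_pos (by omega)]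
    rw [show 2*i+2+2-(i+2) = i+1+1 by omega, show 2*i+2-(i+1) = i+1 by omega,
        show 2*(i+2)+1-(2*i+2+2) = 1 by omega, show 2*(i+1)+1-(2*i+2) = 1 by omega,
        show 2*(i+2) = 2*i+1+1+1+1 by omega, show 2*(i+1) = 2*i+1+1 by omega,
        show 2*i+2+2+1 = 2*i+1+1+1+1+1 by omega, show 2*i+2+1 = 2*i+1+1+1 by omega,
        show i+2 = i+1+1 from rfl, show 2*i+2+2 = 2*i+1+1+1+1 by omega,
        show 2*i+2 = 2*i+1+1 by omega]
    field_simp [fne]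
    simp only [fs]
    push_cast
    ring
  · -- i < k ≤ 2i+1 : general case
    obtain ⟨p, rfl⟩ : ∃ p, k = i + 1 + p := ⟨k - i - 1, by omega⟩
    obtain ⟨q, rfl⟩ : ∃ q, i = p + q := ⟨i - p, by omega⟩
    rw [if_pos (by omega), if_pos (by omega), if_pos (by omega)]
    rw [show p+q+1+p+2-(p+q+2) = p+1 by omega,
        show p+q+1+p-(p+q) = p+1 by omega,
        show p+q+1+p-(p+q+1) = p by omega,
        show 2*(p+q+2)+1-(p+q+1+p+2) = q+1+1 by omega,
        show 2*(p+q)+1-(p+q+1+p) = q by omega,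
        show 2*(p+q+1)+1-(p+q+1+p) = q+1+1 by omega,
        show 2*(p+q+2) = 2*p+(2*q)+1+1+1+1 by omega,
        show 2*(p+q) = 2*p+(2*q) by omega,
        show 2*(p+q+1) = 2*p+(2*q)+1+1 by omega,
        show p+q+1+p+2+1 = 2*p+q+1+1+1+1 by omega,
        show p+q+1+p+1 = 2*p+q+1+1 by omega,
        show p+q+1+p+2 = 2*p+q+1+1+1 by omega,
        show p+q+1+p = 2*p+q+1 by omega,
        show p+q+2 = p+q+1+1 from rfl]
    field_simp [fne]
    simp only [fs]
    push_cast
    ring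

open Polynomial

noncomputable def Qpoly (n : ℕ) : ℝ[X] :=
  ∑ k ∈ Finset.range (n + 1), C (besselCoeff n k) * X ^ k

lemma coeff_Qpoly (n j : ℕ) : (Qpoly n).coeff j = besselCoeff n j := by
  unfold Qpoly
  rw [Polynomial.finset_sum_coeff]
  simp only [Polynomial.coeff_C_mul, Polynomial.coeff_X_pow, mul_ite, mul_one, mul_zero]
  rw [Finset.sum_ite_eq (Finset.range (n+1)) j (fun k => besselCoeff n k)]
  by_cases h : j ∈ Finset.range (n+1)
  · rw [if_pos h]
  · rw [if_neg h]
    unfold besselCoeff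
    have hj : ¬ (j ≤ n) := fun hh => h (Finset.mem_range.mpr (by omega))
    rw [if_neg hj]

lemma delta_gt (i k : ℕ) (h : k < i) : carlitzDelta i k = 0 := by
  unfold carlitzDelta; rw [if_neg (by omega)]

lemma X2Q (i : ℕ) : (X:ℝ[X])^2 * Qpoly i
    = C (((2*i+1)*(2*i+3) : ℝ)) * (Qpoly (i+2) - Qpoly (i+1)) := by
  ext j
  rw [mul_comm, Polynomial.coeff_mul_X_pow']
  simp only [Polynomial.coeff_C_mul, Polynomial.coeff_sub, coeff_Qpoly]
  exact coeffRec i j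

lemma monoExpand (k : ℕ) :
    (X:ℝ[X])^k = ∑ i ∈ Finset.range (k+1), C (carlitzDelta i k) * Qpoly i := by
  induction k using Nat.strong_induction_on with
  | _ k ih =>
    match k with
    | 0 =>
      norm_num [Finset.sum_range_succ, Qpoly, carlitzDelta, besselCoeff, Nat.factorial]
    | 1 =>
      have h0 : carlitzDelta 0 1 = -1 := by
        norm_num [carlitzDelta, Nat.factorial]
      have h1 : carlitzDelta 1 1 = 1 := by
        norm_num [carlitzDelta, Nat.factorial]
      have q0 : Qpoly 0 = C 1 := by
        norm_num [Qpoly, Finset.sum_range_succ, besselCoeff, Nat.factorial]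
      have q1 : Qpoly 1 = C 1 + C 1 * X := by
        norm_num [Qpoly, Finset.sum_range_succ, besselCoeff, Nat.factorial]
      rw [Finset.sum_range_succ, Finset.sum_range_succ, Finset.sum_range_zero,
          h0, h1, q0, q1]
      simp
    | (k+2) =>
      have hk := ih k (by omega)
      have lhs_eq : (X:ℝ[X])^(k+2)
          = (∑ i ∈ Finset.range (k+1),
              C (((2*i+1)*(2*i+3) : ℝ)) * C (carlitzDelta i k) * Qpoly (i+2))
            - ∑ i ∈ Finset.range (k+1),
              C (((2*i+1)*(2*i+3) : ℝ)) * C (carlitzDelta i k) * Qpoly (i+1) := by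
        have h2 : (X:ℝ[X])^(k+2) = X^2 * X^k := by ring
        rw [h2, hk, Finset.mul_sum, ← Finset.sum_sub_distrib]
        refine Finset.sum_congr rfl fun i _ => ?_
        rw [mul_left_comm, X2Q]
        ring
      rw [lhs_eq]
      -- transform the RHS target
      rw [Finset.sum_range_succ' (fun i => C (carlitzDelta i (k+2)) * Qpoly i) (k+2)]
      rw [Finset.sum_range_succ' (fun i => C (carlitzDelta (i+1) (k+2)) * Qpoly (i+1)) (k+1)]
      have hrec : ∀ i ∈ Finset.range (k+1),
          C (carlitzDelta (i+1+1) (k+2)) * Qpoly (i+1+1)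
          = C (((2*i+1)*(2*i+3) : ℝ)) * C (carlitzDelta i k) * Qpoly (i+2)
            - C (((2*i+3)*(2*i+5) : ℝ)) * C (carlitzDelta (i+1) k) * Qpoly (i+2) := by
        intro i _
        rw [show i+1+1 = i+2 from rfl, deltaRec]
        simp only [map_sub, map_mul]
        ring
      rw [Finset.sum_congr rfl hrec, Finset.sum_sub_distrib]
      -- shift identity for the negative sums
      have shift : (∑ i ∈ Finset.range (k+1),
              C (((2*i+1)*(2*i+3) : ℝ)) * C (carlitzDelta i k) * Qpoly (i+1))
          = (∑ i ∈ Finset.range (k+1),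
              C (((2*i+3)*(2*i+5) : ℝ)) * C (carlitzDelta (i+1) k) * Qpoly (i+2))
            + C (3:ℝ) * C (carlitzDelta 0 k) * Qpoly 1 := by
        rw [Finset.sum_range_succ'
          (fun i => C (((2*i+1)*(2*i+3) : ℝ)) * C (carlitzDelta i k) * Qpoly (i+1)) k]
        rw [Finset.sum_range_succ
          (fun i => C (((2*i+3)*(2*i+5) : ℝ)) * C (carlitzDelta (i+1) k) * Qpoly (i+2)) k]
        rw [delta_gt (k+1) k (by omega)]
        have hterm : ∀ i ∈ Finset.range k,
            C (((2*(i+1:ℕ)+1)*(2*(i+1:ℕ)+3) : ℝ)) * C (carlitzDelta (i+1) k) * Qpoly (i+1+1)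
            = C (((2*i+3)*(2*i+5) : ℝ)) * C (carlitzDelta (i+1) k) * Qpoly (i+2) := by
          intro i _
          have : ((2*(i+1:ℕ)+1)*(2*(i+1:ℕ)+3) : ℝ) = ((2*i+3)*(2*i+5) : ℝ) := by
            push_cast; ring
          rw [this]
        rw [Finset.sum_congr rfl hterm]
        norm_num
      rw [shift]
      have d1 : carlitzDelta 1 (k+2) = -(3:ℝ) * carlitzDelta 0 k := delta1 k
      have d0 : carlitzDelta 0 (k+2) = 0 := delta0 k
      norm_num [d1, d0]
      ring

lemma invRel (j k N : ℕ) (hk : k ≤ N) :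
    ∑ i ∈ Finset.range (N+1), besselCoeff i j * carlitzDelta i k
      = if j = k then 1 else 0 := by
  have h := congrArg (fun p => Polynomial.coeff p j) (monoExpand k)
  simp only [Polynomial.coeff_X_pow, Polynomial.finset_sum_coeff,
    Polynomial.coeff_C_mul, coeff_Qpoly] at h
  rw [h]
  have hsub : Finset.range (k+1) ⊆ Finset.range (N+1) := by
    intro x hx
    exact Finset.mem_range.mpr (by have := Finset.mem_range.mp hx; omega)
  rw [← Finset.sum_subset hsub (fun x hx hnx => by
    have hkx : k < x := by
      have := Finset.mem_range.mp hx
      have h2 : ¬ x < k + 1 := fun hh => hnx (Finset.mem_range.mpr hh)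
      omega
    rw [delta_gt x k hkx, mul_zero])]
  exact Finset.sum_congr rfl fun i _ => mul_comm _ _

noncomputable def Ppoly (n : ℕ) (a : ℝ) : ℝ[X] :=
  ∑ k ∈ Finset.range (n + 1), C (besselCoeff n k * a ^ k) * X ^ k

lemma coeff_Ppoly (n : ℕ) (a : ℝ) (j : ℕ) :
    (Ppoly n a).coeff j = besselCoeff n j * a ^ j := by
  unfold Ppoly
  rw [Polynomial.finset_sum_coeff]
  simp only [Polynomial.coeff_C_mul, Polynomial.coeff_X_pow, mul_ite, mul_one, mul_zero]
  rw [Finset.sum_ite_eq (Finset.range (n+1)) j (fun k => besselCoeff n k * a ^ k)]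
  by_cases h : j ∈ Finset.range (n+1)
  · rw [if_pos h]
  · rw [if_neg h]
    have hj : ¬ (j ≤ n) := fun hh => h (Finset.mem_range.mpr (by omega))
    unfold besselCoeff
    rw [if_neg hj, zero_mul]

lemma eval_Ppoly (n : ℕ) (a u : ℝ) : (Ppoly n a).eval u = besselQ n (a * u) := by
  unfold Ppoly besselQ
  rw [Polynomial.eval_finset_sum]
  refine Finset.sum_congr rfl fun k hk => ?_
  have hkn : k ≤ n := by have := Finset.mem_range.mp hk; omega
  simp only [Polynomial.eval_mul, Polynomial.eval_C, Polynomial.eval_pow, Polynomial.eval_X]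
  unfold besselCoeff
  rw [if_pos hkn, mul_pow]
  ring

lemma eval_Qpoly (n : ℕ) (u : ℝ) : (Qpoly n).eval u = besselQ n u := by
  unfold Qpoly besselQ
  rw [Polynomial.eval_finset_sum]
  refine Finset.sum_congr rfl fun k hk => ?_
  have hkn : k ≤ n := by have := Finset.mem_range.mp hk; omega
  simp only [Polynomial.eval_mul, Polynomial.eval_C, Polynomial.eval_pow, Polynomial.eval_X]
  unfold besselCoeff
  rw [if_pos hkn]

theorem bessel_linearization_double_sum
    (n m : ℕ) (a : ℝ) (β : ℕ → ℝ)
    (hβ : ∀ u : ℝ, besselQ n (a * u) * besselQ m ((1 - a) * u) =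
      ∑ k ∈ Finset.range (n + m + 1), β k * besselQ k u)
    (i : ℕ) (hi : i ≤ n + m) :
    β i = ∑ k ∈ Finset.Icc i (n + m), carlitzDelta i k *
      ∑ j ∈ Finset.range (k + 1),
        besselCoeff n j * besselCoeff m (k - j) * a ^ j * (1 - a) ^ (k - j) := by
  set N := n + m with hN
  have hpoly : Ppoly n a * Ppoly m (1-a) = ∑ k ∈ Finset.range (N+1), C (β k) * Qpoly k := by
    apply Polynomial.funext
    intro u
    rw [Polynomial.eval_mul, eval_Ppoly, eval_Ppoly, hβ u, Polynomial.eval_finset_sum]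
    exact Finset.sum_congr rfl fun k _ => by
      rw [Polynomial.eval_mul, Polynomial.eval_C, eval_Qpoly]
  -- coefficients of the product
  have hcoeff : ∀ j : ℕ, (Ppoly n a * Ppoly m (1-a)).coeff j
      = ∑ k ∈ Finset.range (N+1), besselCoeff k j * β k := by
    intro j
    rw [hpoly, Polynomial.finset_sum_coeff]
    exact Finset.sum_congr rfl fun k _ => by
      rw [Polynomial.coeff_C_mul, coeff_Qpoly]; ring
  -- matrices
  have hAD : (Matrix.of fun j k : Fin (N+1) => besselCoeff k j)
      * (Matrix.of fun j k : Fin (N+1) => carlitzDelta j k) = 1 := by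
    ext j l
    rw [Matrix.mul_apply]
    have h1 : ∑ x : Fin (N+1),
        (Matrix.of fun j k : Fin (N+1) => besselCoeff k j) j x
          * (Matrix.of fun j k : Fin (N+1) => carlitzDelta j k) x l
        = ∑ x ∈ Finset.range (N+1), besselCoeff x (j:ℕ) * carlitzDelta x (l:ℕ) :=
      Fin.sum_univ_eq_sum_range (fun x => besselCoeff x (j:ℕ) * carlitzDelta x (l:ℕ)) (N+1)
    rw [h1, invRel (j:ℕ) (l:ℕ) N (by omega)]
    rw [Matrix.one_apply]
    by_cases h : j = l
    · rw [if_pos h, if_pos (by rw [h])]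
    · rw [if_neg h, if_neg (fun hh => h (Fin.ext hh))]
  have hDA : (Matrix.of fun j k : Fin (N+1) => carlitzDelta j k)
      * (Matrix.of fun j k : Fin (N+1) => besselCoeff k j) = 1 :=
    mul_eq_one_comm.mp hAD
  -- vector computation
  have hAb : (Matrix.of fun j k : Fin (N+1) => besselCoeff k j).mulVec
        (fun k : Fin (N+1) => β k)
      = fun j : Fin (N+1) => (Ppoly n a * Ppoly m (1-a)).coeff (j:ℕ) := by
    funext j
    rw [hcoeff (j:ℕ)]
    exact Fin.sum_univ_eq_sum_range (fun k => besselCoeff k (j:ℕ) * β k) (N+1)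
  have key : (fun k : Fin (N+1) => β k)
      = (Matrix.of fun j k : Fin (N+1) => carlitzDelta j k).mulVec
          (fun j : Fin (N+1) => (Ppoly n a * Ppoly m (1-a)).coeff (j:ℕ)) := by
    conv_lhs => rw [← Matrix.one_mulVec (fun k : Fin (N+1) => β k), ← hDA,
      ← Matrix.mulVec_mulVec, hAb]
  have hb : β i = ∑ k ∈ Finset.range (N+1),
      carlitzDelta i k * (Ppoly n a * Ppoly m (1-a)).coeff k := by
    have h2 := congrFun key ⟨i, by omega⟩
    rw [h2]
    exact Fin.sum_univ_eq_sum_range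
      (fun k => carlitzDelta i k * (Ppoly n a * Ppoly m (1-a)).coeff k) (N+1)
  rw [hb]
  -- restrict the sum to Icc and compute the product coefficients
  have hsub : Finset.Icc i N ⊆ Finset.range (N+1) := by
    intro x hx
    rw [Finset.mem_Icc] at hx
    exact Finset.mem_range.mpr (by omega)
  rw [← Finset.sum_subset hsub (fun x hx hnx => by
    have hxi : x < i := by
      rw [Finset.mem_Icc] at hnx
      have := Finset.mem_range.mp hx
      omega
    rw [delta_gt i x hxi, zero_mul])]
  refine Finset.sum_congr rfl fun k _ => ?_
  congr 1
  rw [Polynomial.coeff_mul, Finset.Nat.sum_antidiagonal_eq_sum_range_succ_mk]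
  refine Finset.sum_congr rfl fun j _ => ?_
  rw [coeff_Ppoly, coeff_Ppoly]
  ring
end

section
/- For all natural numbers n, m and every real number a, the top linearization coefficient of the Bessel polynomials is β_{n+m}^{(n,m)}(a) = a^n (1−a)^m · (1/2)_{n+m} / ((1/2)_n (1/2)_m). -/
open Finset

noncomputable def besselC (n k : ℕ) : ℝ :=
  ((n.factorial : ℝ) * (2 * n - k).factorial * 2 ^ k) /
      ((2 * n).factorial * (n - k).factorial * k.factorial)

noncomputable def bP (n : ℕ) (c : ℝ) : Polynomial ℝ :=
  ∑ k ∈ Finset.range (n + 1), Polynomial.C (besselC n k * c ^ k) * Polynomial.X ^ k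

lemma bP_eval (n : ℕ) (c u : ℝ) : (bP n c).eval u = besselQ n (c * u) := by
  rw [bP, Polynomial.eval_finset_sum, besselQ]
  apply Finset.sum_congr rfl
  intro k _
  simp [besselC, mul_pow]
  ring

lemma coeff_sumC (f : ℕ → ℝ) (N j : ℕ) :
    (∑ k ∈ Finset.range N, Polynomial.C (f k) * Polynomial.X ^ k).coeff j
      = if j < N then f j else 0 := by
  rw [Polynomial.finset_sum_coeff]
  simp only [Polynomial.coeff_C_mul, Polynomial.coeff_X_pow, mul_ite, mul_one, mul_zero]
  rw [Finset.sum_ite_eq (Finset.range N) j f]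
  simp

lemma bP_coeff (n : ℕ) (c : ℝ) (j : ℕ) :
    (bP n c).coeff j = if j < n + 1 then besselC n j * c ^ j else 0 := by
  simpa [bP] using coeff_sumC (fun k => besselC n k * c ^ k) (n + 1) j

lemma poch_half (k : ℕ) :
    poch (1/2) k = ((2 * k).factorial : ℝ) / (4 ^ k * k.factorial) := by
  induction k with
  | zero => simp [poch]
  | succ k ih =>
    have h2 : 2 * (k + 1) = (2 * k + 1) + 1 := by ring
    rw [poch, Finset.prod_range_succ, ← poch, ih, h2, Nat.factorial_succ, Nat.factorial_succ,
      Nat.factorial_succ]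
    have hf : ((2 * k).factorial : ℝ) ≠ 0 := Nat.cast_ne_zero.mpr (Nat.factorial_ne_zero _)
    have hk : (k.factorial : ℝ) ≠ 0 := Nat.cast_ne_zero.mpr (Nat.factorial_ne_zero _)
    have h4 : (4 : ℝ) ^ k ≠ 0 := by positivity
    push_cast
    field_simp
    ring

lemma poch_half_pos (k : ℕ) : 0 < poch (1/2) k := by
  rw [poch_half]
  positivity

theorem bessel_linearization_top_coefficient
    (n m : ℕ) (a : ℝ) (β : ℕ → ℝ)
    (hβ : ∀ u : ℝ, besselQ n (a * u) * besselQ m ((1 - a) * u) =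
      ∑ k ∈ Finset.range (n + m + 1), β k * besselQ k u) :
    β (n + m) = a ^ n * (1 - a) ^ m * poch (1/2) (n + m) / (poch (1/2) n * poch (1/2) m) := by
  have hpoly : bP n a * bP m (1 - a)
      = ∑ k ∈ Finset.range (n + m + 1), Polynomial.C (β k) * bP k 1 := by
    apply Polynomial.funext
    intro u
    rw [Polynomial.eval_mul, bP_eval, bP_eval, hβ u]
    rw [Polynomial.eval_finset_sum]
    apply Finset.sum_congr rfl
    intro k _
    rw [Polynomial.eval_mul, Polynomial.eval_C, bP_eval, one_mul]
  have hL : (bP n a * bP m (1 - a)).coeff (n + m)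
      = besselC n n * a ^ n * (besselC m m * (1 - a) ^ m) := by
    rw [Polynomial.coeff_mul]
    rw [Finset.sum_eq_single (n, m)]
    · rw [bP_coeff, bP_coeff]
      simp
    · rintro ⟨i, j⟩ hij hne
      rw [Finset.HasAntidiagonal.mem_antidiagonal] at hij
      simp only at hij
      rw [bP_coeff, bP_coeff]
      rcases lt_or_ge n i with h | h
      · rw [if_neg (by omega)]; ring
      · have hi : i ≠ n := by
          rintro rfl
          have : j = m := by omega
          subst this; exact hne rfl
        have hj : m < j := by omega
        rw [if_pos (by omega), if_neg (by omega)]; ring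
    · intro h
      exact absurd (by simp : (n, m) ∈ Finset.HasAntidiagonal.antidiagonal (n + m)) h
  have hR : (∑ k ∈ Finset.range (n + m + 1), Polynomial.C (β k) * bP k 1).coeff (n + m)
      = β (n + m) * besselC (n + m) (n + m) := by
    rw [Polynomial.finset_sum_coeff]
    rw [Finset.sum_eq_single (n + m)]
    · rw [Polynomial.coeff_C_mul, bP_coeff]
      simp
    · intro k hk hne
      rw [Finset.mem_range] at hk
      rw [Polynomial.coeff_C_mul, bP_coeff, if_neg (by omega), mul_zero]
    · intro h
      exact absurd (Finset.mem_range.mpr (by omega)) h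
  have key : besselC n n * a ^ n * (besselC m m * (1 - a) ^ m)
      = β (n + m) * besselC (n + m) (n + m) := by
    rw [← hL, ← hR, hpoly]
  -- simplify besselC k k
  have hB : ∀ k : ℕ, besselC k k = (k.factorial : ℝ) * 2 ^ k / (2 * k).factorial := by
    intro k
    have h1 : 2 * k - k = k := by omega
    have h2 : k - k = 0 := by omega
    rw [besselC, h1, h2]
    have hk : (k.factorial : ℝ) ≠ 0 := Nat.cast_ne_zero.mpr (Nat.factorial_ne_zero _)
    have hf : ((2 * k).factorial : ℝ) ≠ 0 := Nat.cast_ne_zero.mpr (Nat.factorial_ne_zero _)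
    simp [Nat.factorial_zero]
    field_simp
  have hBpos : ∀ k : ℕ, (0:ℝ) < besselC k k := by
    intro k
    rw [hB]
    have := Nat.factorial_pos k
    have := Nat.factorial_pos (2 * k)
    positivity
  have hBmpoch : ∀ k : ℕ, besselC k k = 1 / (2 ^ k * poch (1/2) k) := by
    intro k
    rw [hB, poch_half]
    have hk : (k.factorial : ℝ) ≠ 0 := Nat.cast_ne_zero.mpr (Nat.factorial_ne_zero _)
    have hf : ((2 * k).factorial : ℝ) ≠ 0 := Nat.cast_ne_zero.mpr (Nat.factorial_ne_zero _)
    have h4 : (4:ℝ)^k = 2^k * 2^k := by rw [← mul_pow]; norm_num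
    rw [h4]
    field_simp
  rw [hBmpoch, hBmpoch, hBmpoch, pow_add] at key
  have p1 := (poch_half_pos n).ne'
  have p2 := (poch_half_pos m).ne'
  have p3 := (poch_half_pos (n + m)).ne'
  have t1 : (2:ℝ)^n ≠ 0 := by positivity
  have t2 : (2:ℝ)^m ≠ 0 := by positivity
  field_simp at key
  rw [eq_div_iff (mul_ne_zero p1 p2)]
  apply mul_left_cancel₀ (mul_ne_zero t1 t2)
  linear_combination (-((2:ℝ)^n * 2^m)) * key
end

section
/- For all natural numbers n and m ≥ 2 and every real number a with a ≠ 0, β_{n+m−2}^{(n,m)}(a) = a^{n+2} (1−a)^{m−2} · ((1/2)_2 · (1/2)_{n+m−2}) / ((1/2)_n (1/2)_m) · ( C(n+m+1, 4) − C(n+m+1, 3)·C(n−1, 1)·a^{−1} + C(n+m+1, 2)·C(n, 2)·a^{−2} − C(n+m+1, 1)·C(n+1, 3)·a^{−3} + C(n+2, 4)·a^{−4} ), where C(n−1, 1) is the generalized binomial coefficient (equal to n−1, possibly negative) and all other C are usual binomial coefficients. -/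
open Finset

/-! ### Auxiliary machinery -/

noncomputable def Acoef (n k : ℕ) : ℝ :=
  ((n.factorial : ℝ) * (2 * n - k).factorial * 2 ^ k) /
      ((2 * n).factorial * (n - k).factorial * k.factorial)

noncomputable def QB (n : ℕ) (a : ℝ) : Polynomial ℝ :=
  ∑ k ∈ Finset.range (n + 1), Polynomial.C (Acoef n k * a ^ k) * Polynomial.X ^ k

noncomputable def c1R (n : ℕ) : ℝ := (n : ℝ) * ((n : ℝ) + 1) / 2
noncomputable def c2R (n : ℕ) : ℝ := ((n:ℝ)+2)*((n:ℝ)+1)*(n:ℝ)*((n:ℝ)-1)/8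

lemma fac_pos (k : ℕ) : (0:ℝ) < (k.factorial : ℝ) := by
  exact_mod_cast k.factorial_pos

lemma Acoef_diag (k : ℕ) : Acoef k k = (k.factorial : ℝ) * 2 ^ k / (2*k).factorial := by
  unfold Acoef
  rw [show 2*k - k = k from by omega, Nat.sub_self]
  have := fac_pos k
  have := fac_pos (2*k)
  field_simp
  ring

lemma Acoef_diag_ne (k : ℕ) : Acoef k k ≠ 0 := by
  rw [Acoef_diag]
  have h1 := fac_pos k
  have h2 := fac_pos (2*k)
  positivity

lemma Acoef_sub_one (k : ℕ) (hk : 1 ≤ k) : Acoef k (k-1) = Acoef k k * c1R k := by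
  obtain ⟨j, rfl⟩ : ∃ j, k = j + 1 := ⟨k - 1, by omega⟩
  rw [Acoef_diag]
  unfold Acoef c1R
  rw [show j + 1 - 1 = j from rfl, show 2*(j+1) - j = j + 2 from by omega,
    show j + 1 - j = 1 from by omega]
  have h1 := fac_pos j
  have h2 := fac_pos (2*(j+1))
  rw [show (j+2).factorial = (j+2) * ((j+1) * j.factorial) from by
    rw [Nat.factorial_succ, Nat.factorial_succ],
    show (j+1).factorial = (j+1) * j.factorial from Nat.factorial_succ j,
    pow_succ]
  push_cast
  field_simp
  ring

lemma Acoef_sub_two (k : ℕ) (hk : 2 ≤ k) : Acoef k (k-2) = Acoef k k * c2R k := by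
  obtain ⟨j, rfl⟩ : ∃ j, k = j + 2 := ⟨k - 2, by omega⟩
  rw [Acoef_diag]
  unfold Acoef c2R
  rw [show j + 2 - 2 = j from rfl, show 2*(j+2) - j = j + 4 from by omega,
    show j + 2 - j = 2 from by omega]
  have h1 := fac_pos j
  have h2 := fac_pos (2*(j+2))
  rw [show (j+4).factorial = (j+4)*((j+3)*((j+2)*((j+1) * j.factorial))) from by
    rw [Nat.factorial_succ, Nat.factorial_succ, Nat.factorial_succ, Nat.factorial_succ],
    show (j+2).factorial = (j+2)*((j+1) * j.factorial) from by
    rw [Nat.factorial_succ, Nat.factorial_succ]]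
  push_cast
  field_simp
  ring

lemma AA (k : ℕ) : Acoef k k * poch (1/2) k * 2 ^ k = 1 := by
  induction k with
  | zero => simp [Acoef, poch]
  | succ j ih =>
    rw [Acoef_diag] at ih ⊢
    unfold poch at ih ⊢
    rw [Finset.prod_range_succ]
    have h1 := fac_pos j
    have h2 := fac_pos (2*j)
    have h3 : (0:ℝ) < 2 ^ j := by positivity
    set P : ℝ := ∏ i ∈ Finset.range j, (1/2 + (i:ℝ)) with hPdef
    have hP : P = ((2*j).factorial : ℝ) / ((j.factorial:ℝ) * (2^j*2^j)) := by
      rw [eq_div_iff (by positivity)]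
      field_simp at ih
      linarith [ih]
    rw [hP, show 2*(j+1) = (2*j+1)+1 from by omega, Nat.factorial_succ, Nat.factorial_succ,
      Nat.factorial_succ, pow_succ]
    push_cast
    field_simp
    ring

lemma chooseTwoR (k : ℕ) : (k.choose 2 : ℝ) = k * (k - 1) / 2 := by
  induction k with
  | zero => simp
  | succ j ih =>
    rw [Nat.choose_succ_succ]
    push_cast [ih, Nat.choose_one_right]
    ring

lemma chooseThreeR (k : ℕ) : (k.choose 3 : ℝ) = k * (k - 1) * (k - 2) / 6 := by
  induction k with
  | zero => simp
  | succ j ih =>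
    rw [Nat.choose_succ_succ]
    push_cast [ih, chooseTwoR]
    ring

lemma chooseFourR (k : ℕ) : (k.choose 4 : ℝ) = k * (k - 1) * (k - 2) * (k - 3) / 24 := by
  induction k with
  | zero => simp
  | succ j ih =>
    rw [Nat.choose_succ_succ]
    push_cast [ih, chooseThreeR]
    ring

lemma QB_eval (n : ℕ) (a u : ℝ) : (QB n a).eval u = besselQ n (a * u) := by
  unfold QB besselQ
  rw [Polynomial.eval_finset_sum]
  refine Finset.sum_congr rfl fun k _ => ?_
  simp [Acoef, mul_pow]; ring

lemma QB_coeff (n : ℕ) (a : ℝ) (j : ℕ) :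
    (QB n a).coeff j = if j ≤ n then Acoef n j * a ^ j else 0 := by
  unfold QB
  rw [Polynomial.finset_sum_coeff]
  simp only [Polynomial.coeff_C_mul, Polynomial.coeff_X_pow, mul_ite, mul_one, mul_zero]
  simp only [eq_comm (a := j)]
  rw [Finset.sum_ite_eq' (Finset.range (n+1)) j]
  simp [Nat.lt_succ_iff]

lemma coeff_mul_QB (n m : ℕ) (a b : ℝ) (j : ℕ) :
    (QB n a * QB m b).coeff j = ∑ i ∈ Finset.range (j+1),
      (if i ≤ n then Acoef n i * a^i else 0) *
      (if j - i ≤ m then Acoef m (j-i) * b^(j-i) else 0) := by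
  rw [Polynomial.coeff_mul, Finset.Nat.sum_antidiagonal_eq_sum_range_succ_mk]
  exact Finset.sum_congr rfl fun i _ => by rw [QB_coeff, QB_coeff]

lemma L0 (n m : ℕ) (a b : ℝ) :
    (QB n a * QB m b).coeff (n+m) = Acoef n n * Acoef m m * (a^n * b^m) := by
  rw [coeff_mul_QB]
  rw [Finset.sum_eq_single_of_mem n (Finset.mem_range.2 (by omega))]
  · rw [if_pos (le_refl n), if_pos (show n+m-n ≤ m from by omega),
      show n + m - n = m from by omega]
    ring
  · intro i hi hne
    rcases lt_or_gt_of_ne hne with h | h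
    · exact mul_eq_zero_of_right _ (if_neg (show ¬(n+m-i ≤ m) from by omega))
    · exact mul_eq_zero_of_left (if_neg (show ¬(i ≤ n) from by omega)) _

lemma L1 (n m : ℕ) (hm : 1 ≤ m) (a b : ℝ) :
    (QB n a * QB m b).coeff (n+m-1)
      = Acoef n n * Acoef m m *
        (c1R n * a^(n-1) * b^m + c1R m * a^n * b^(m-1)) := by
  rw [coeff_mul_QB, show n + m - 1 + 1 = n + m from by omega]
  rw [← Finset.sum_subset (Finset.range_subset_range.2 (show n+1 ≤ n+m from by omega))
      (fun x hx hnx => mul_eq_zero_of_left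
        (if_neg (show ¬(x ≤ n) from by simp only [Finset.mem_range] at hnx; omega)) _)]
  rw [Finset.sum_range_succ]
  have hrest : (∑ i ∈ Finset.range n,
      (if i ≤ n then Acoef n i * a^i else 0) *
      (if n+m-1 - i ≤ m then Acoef m (n+m-1-i) * b^(n+m-1-i) else 0))
      = Acoef n n * c1R n * a^(n-1) * (Acoef m m * b^m) := by
    match n with
    | 0 => simp [c1R]
    | (n'+1) =>
      rw [Finset.sum_range_succ]
      rw [Finset.sum_eq_zero fun i hi => mul_eq_zero_of_right _
        (if_neg (show ¬(n'+1+m-1-i ≤ m) from by simp only [Finset.mem_range] at hi; omega))]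
      rw [if_pos (show n' ≤ n'+1 from by omega),
        if_pos (show n'+1+m-1-n' ≤ m from by omega),
        show n'+1+m-1-n' = m from by omega, zero_add]
      rw [show Acoef (n'+1) n' = Acoef (n'+1) (n'+1) * c1R (n'+1) from
        Acoef_sub_one (n'+1) (by omega), show n'+1-1 = n' from rfl]
      try ring
  rw [hrest, if_pos (le_refl n), if_pos (show n+m-1-n ≤ m from by omega),
    show n+m-1-n = m-1 from by omega,
    show Acoef m (m-1) = Acoef m m * c1R m from Acoef_sub_one m hm]
  ring

lemma L2 (n m : ℕ) (hm : 2 ≤ m) (a b : ℝ) :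
    (QB n a * QB m b).coeff (n+m-2)
      = Acoef n n * Acoef m m *
        (c2R n * a^(n-2) * b^m + c1R n * c1R m * a^(n-1) * b^(m-1)
          + c2R m * a^n * b^(m-2)) := by
  rw [coeff_mul_QB, show n + m - 2 + 1 = n + m - 1 from by omega]
  rw [← Finset.sum_subset (Finset.range_subset_range.2 (show n+1 ≤ n+m-1 from by omega))
      (fun x hx hnx => mul_eq_zero_of_left
        (if_neg (show ¬(x ≤ n) from by simp only [Finset.mem_range] at hnx; omega)) _)]
  rw [Finset.sum_range_succ]
  have hrest : (∑ i ∈ Finset.range n,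
      (if i ≤ n then Acoef n i * a^i else 0) *
      (if n+m-2 - i ≤ m then Acoef m (n+m-2-i) * b^(n+m-2-i) else 0))
      = Acoef n n * Acoef m m *
        (c2R n * a^(n-2) * b^m + c1R n * c1R m * a^(n-1) * b^(m-1)) := by
    match n with
    | 0 => simp [c1R, c2R]
    | (n'+1) =>
      rw [Finset.sum_range_succ]
      have hrest2 : (∑ i ∈ Finset.range n',
          (if i ≤ n'+1 then Acoef (n'+1) i * a^i else 0) *
          (if n'+1+m-2 - i ≤ m then Acoef m (n'+1+m-2-i) * b^(n'+1+m-2-i) else 0))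
          = Acoef (n'+1) (n'+1) * Acoef m m * (c2R (n'+1) * a^(n'+1-2) * b^m) := by
        match n' with
        | 0 => simp [c2R]
        | (n''+1) =>
          rw [Finset.sum_range_succ]
          rw [Finset.sum_eq_zero fun i hi => mul_eq_zero_of_right _
            (if_neg (show ¬(n''+1+1+m-2-i ≤ m) from by
              simp only [Finset.mem_range] at hi; omega))]
          rw [if_pos (show n'' ≤ n''+1+1 from by omega),
            if_pos (show n''+1+1+m-2-n'' ≤ m from by omega),
            show n''+1+1+m-2-n'' = m from by omega, zero_add]
          rw [show Acoef (n''+2) n'' = Acoef (n''+2) (n''+2) * c2R (n''+2) from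
            Acoef_sub_two (n''+2) (by omega), show n''+1+1-2 = n'' from rfl]
          ring
      rw [hrest2]
      rw [if_pos (show n' ≤ n'+1 from by omega),
        if_pos (show n'+1+m-2-n' ≤ m from by omega),
        show n'+1+m-2-n' = m-1 from by omega]
      rw [show Acoef (n'+1) n' = Acoef (n'+1) (n'+1) * c1R (n'+1) from
        Acoef_sub_one (n'+1) (by omega), show n'+1-1 = n' from rfl]
      rw [show Acoef m (m-1) = Acoef m m * c1R m from Acoef_sub_one m (by omega)]
      ring
  rw [hrest, if_pos (le_refl n), if_pos (show n+m-2-n ≤ m from by omega),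
    show n+m-2-n = m-2 from by omega]
  rw [show Acoef m (m-2) = Acoef m m * c2R m from Acoef_sub_two m hm]
  ring

lemma Rcoeff (N : ℕ) (g : ℕ → ℝ) (j : ℕ) :
    (∑ k ∈ Finset.range (N+1), Polynomial.C (g k) * QB k 1).coeff j
      = ∑ k ∈ Finset.range (N+1), g k * (if j ≤ k then Acoef k j else 0) := by
  rw [Polynomial.finset_sum_coeff]
  refine Finset.sum_congr rfl fun k _ => ?_
  rw [Polynomial.coeff_C_mul, QB_coeff]
  simp

lemma R0 (N : ℕ) (g : ℕ → ℝ) :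
    (∑ k ∈ Finset.range (N+1), Polynomial.C (g k) * QB k 1).coeff N
      = g N * Acoef N N := by
  rw [Rcoeff, Finset.sum_eq_single_of_mem N (Finset.mem_range.2 (by omega))]
  · rw [if_pos (le_refl N)]
  · intro k hk hne
    rw [if_neg (show ¬(N ≤ k) from by simp only [Finset.mem_range] at hk; omega), mul_zero]

lemma R1 (N' : ℕ) (g : ℕ → ℝ) :
    (∑ k ∈ Finset.range (N'+1+1), Polynomial.C (g k) * QB k 1).coeff N'
      = g N' * Acoef N' N' + g (N'+1) * Acoef (N'+1) N' := by
  rw [Rcoeff, Finset.sum_range_succ, Finset.sum_range_succ]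
  rw [Finset.sum_eq_zero fun k hk => by
    rw [if_neg (show ¬(N' ≤ k) from by simp only [Finset.mem_range] at hk; omega), mul_zero]]
  rw [if_pos (le_refl N'), if_pos (show N' ≤ N'+1 from by omega), zero_add]

lemma R2 (N'' : ℕ) (g : ℕ → ℝ) :
    (∑ k ∈ Finset.range (N''+2+1), Polynomial.C (g k) * QB k 1).coeff N''
      = g N'' * Acoef N'' N'' + g (N''+1) * Acoef (N''+1) N''
        + g (N''+2) * Acoef (N''+2) N'' := by
  rw [Rcoeff, Finset.sum_range_succ, Finset.sum_range_succ, Finset.sum_range_succ]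
  rw [Finset.sum_eq_zero fun k hk => by
    rw [if_neg (show ¬(N'' ≤ k) from by simp only [Finset.mem_range] at hk; omega), mul_zero]]
  rw [if_pos (le_refl N''), if_pos (show N'' ≤ N''+1 from by omega),
    if_pos (show N'' ≤ N''+2 from by omega), zero_add]

lemma Acoef_inv (k : ℕ) : Acoef k k = (poch (1/2) k * 2^k)⁻¹ := by
  have h : (poch (1/2) k * 2^k) * Acoef k k = 1 := by linear_combination AA k
  exact eq_inv_of_mul_eq_one_left (by linear_combination h)

lemma poch_two : poch (1/2) 2 = 3/4 := by
  unfold poch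
  rw [Finset.prod_range_succ, Finset.prod_range_succ]
  norm_num

lemma gbinom_one (z : ℤ) : gbinom z 1 = (z : ℝ) := by
  simp [gbinom]

set_option maxHeartbeats 2000000 in
theorem bessel_linearization_third_coefficient
    (n m : ℕ) (hm : 2 ≤ m) (a : ℝ) (ha : a ≠ 0)
    (β : ℕ → ℝ)
    (hβ : ∀ u : ℝ, besselQ n (a * u) * besselQ m ((1 - a) * u) =
      ∑ k ∈ Finset.range (n + m + 1), β k * besselQ k u) :
    β (n + m - 2) = a ^ (n + 2) * (1 - a) ^ (m - 2) *
      (poch (1/2) 2 * poch (1/2) (n + m - 2)) / (poch (1/2) n * poch (1/2) m) *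
      (((n + m + 1).choose 4 : ℝ) -
        ((n + m + 1).choose 3 : ℝ) * gbinom ((n : ℤ) - 1) 1 * a ^ (-1 : ℤ) +
        ((n + m + 1).choose 2 : ℝ) * (n.choose 2 : ℝ) * a ^ (-2 : ℤ) -
        ((n + m + 1).choose 1 : ℝ) * ((n + 1).choose 3 : ℝ) * a ^ (-3 : ℤ) +
        ((n + 2).choose 4 : ℝ) * a ^ (-4 : ℤ)) := by
  obtain ⟨m2, rfl⟩ : ∃ m2, m = m2 + 2 := ⟨m - 2, by omega⟩
  -- polynomial identity
  have hpoly : QB n a * QB (m2+2) (1-a)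
      = ∑ k ∈ Finset.range (n + (m2+2) + 1), Polynomial.C (β k) * QB k 1 := by
    apply Polynomial.funext
    intro u
    rw [Polynomial.eval_mul, QB_eval, QB_eval, Polynomial.eval_finset_sum, hβ u]
    refine Finset.sum_congr rfl fun k _ => ?_
    rw [Polynomial.eval_mul, Polynomial.eval_C, QB_eval, one_mul]
  -- coefficient equations
  have e0 : Acoef n n * Acoef (m2+2) (m2+2) * (a^n * (1-a)^(m2+2))
      = β (n+m2+2) * Acoef (n+m2+2) (n+m2+2) := by
    have h := congrArg (fun p : Polynomial ℝ => p.coeff (n+(m2+2))) hpoly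
    rw [L0] at h
    rw [show n+(m2+2) = n+m2+2 from by omega] at h
    rw [R0 (n+m2+2) β] at h
    exact h
  have e1 : Acoef n n * Acoef (m2+2) (m2+2) *
        (c1R n * a^(n-1) * (1-a)^(m2+2) + c1R (m2+2) * a^n * (1-a)^(m2+1))
      = β (n+m2+1) * Acoef (n+m2+1) (n+m2+1)
        + β (n+m2+2) * (Acoef (n+m2+2) (n+m2+2) * c1R (n+m2+2)) := by
    have h := congrArg (fun p : Polynomial ℝ => p.coeff (n+(m2+2)-1)) hpoly
    rw [L1 n (m2+2) (by omega)] at h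
    rw [show m2+2-1 = m2+1 from by omega] at h
    rw [show n+(m2+2)-1 = n+m2+1 from by omega] at h
    rw [show n+(m2+2)+1 = n+m2+1+1+1 from by omega] at h
    rw [R1 (n+m2+1) β] at h
    rw [show n+m2+1+1 = n+m2+2 from by omega] at h
    rw [show Acoef (n+m2+2) (n+m2+1) = Acoef (n+m2+2) (n+m2+2) * c1R (n+m2+2) from by
      rw [show n+m2+1 = (n+m2+2)-1 from by omega]
      exact Acoef_sub_one (n+m2+2) (by omega)] at h
    exact h
  have e2 : Acoef n n * Acoef (m2+2) (m2+2) *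
        (c2R n * a^(n-2) * (1-a)^(m2+2) + c1R n * c1R (m2+2) * a^(n-1) * (1-a)^(m2+1)
          + c2R (m2+2) * a^n * (1-a)^m2)
      = β (n+m2) * Acoef (n+m2) (n+m2)
        + β (n+m2+1) * (Acoef (n+m2+1) (n+m2+1) * c1R (n+m2+1))
        + β (n+m2+2) * (Acoef (n+m2+2) (n+m2+2) * c2R (n+m2+2)) := by
    have h := congrArg (fun p : Polynomial ℝ => p.coeff (n+(m2+2)-2)) hpoly
    rw [L2 n (m2+2) (by omega)] at h
    rw [show m2+2-1 = m2+1 from by omega, show m2+2-2 = m2 from by omega] at h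
    rw [show n+(m2+2)-2 = n+m2 from by omega] at h
    rw [show n+(m2+2)+1 = n+m2+2+1 from by omega] at h
    rw [R2 (n+m2) β] at h
    rw [show Acoef (n+m2+1) (n+m2) = Acoef (n+m2+1) (n+m2+1) * c1R (n+m2+1) from by
      rw [show n+m2 = (n+m2+1)-1 from by omega]
      exact Acoef_sub_one (n+m2+1) (by omega)] at h
    rw [show Acoef (n+m2+2) (n+m2) = Acoef (n+m2+2) (n+m2+2) * c2R (n+m2+2) from by
      rw [show n+m2 = (n+m2+2)-2 from by omega]
      exact Acoef_sub_two (n+m2+2) (by omega)] at h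
    exact h
  -- solve the triangular system
  set Sval : ℝ :=
    c2R n * a^(n-2) * (1-a)^(m2+2) + c1R n * c1R (m2+2) * a^(n-1) * (1-a)^(m2+1)
      + c2R (m2+2) * a^n * (1-a)^m2
      - c1R (n+m2+1) * (c1R n * a^(n-1) * (1-a)^(m2+2) + c1R (m2+2) * a^n * (1-a)^(m2+1))
      - (c2R (n+m2+2) - c1R (n+m2+1) * c1R (n+m2+2)) * (a^n * (1-a)^(m2+2)) with hSval
  have hb2 : β (n+m2) * Acoef (n+m2) (n+m2)
      = Acoef n n * Acoef (m2+2) (m2+2) * Sval := by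
    rw [hSval]
    linear_combination -e2 + c1R (n+m2+1) * e1
      + (c2R (n+m2+2) - c1R (n+m2+1) * c1R (n+m2+2)) * e0
  have hbval : β (n+m2)
      = poch (1/2) (n+m2) / (4 * poch (1/2) n * poch (1/2) (m2+2)) * Sval := by
    have h := hb2
    rw [Acoef_inv n, Acoef_inv (m2+2), Acoef_inv (n+m2)] at h
    have pn := (poch_half_pos n).ne'
    have pm := (poch_half_pos (m2+2)).ne'
    have pN := (poch_half_pos (n+m2)).ne'
    have h2n : (2:ℝ)^n ≠ 0 := by positivity
    have h2m : (2:ℝ)^(m2+2) ≠ 0 := by positivity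
    have h2N : (2:ℝ)^(n+m2) ≠ 0 := by positivity
    field_simp at h ⊢
    apply mul_right_cancel₀ h2N
    linear_combination h
  -- final identity
  rw [show n+(m2+2)-2 = n+m2 from by omega, show m2+2-2 = m2 from by omega,
    show n+(m2+2)+1 = n+m2+3 from by omega, hbval, poch_two, gbinom_one]
  have key : Sval = 3 * a^(n+2) * (1-a)^m2 *
      (((n+m2+3).choose 4 : ℝ) -
        ((n+m2+3).choose 3 : ℝ) * (((n:ℤ) - 1 : ℤ) : ℝ) * a ^ (-1 : ℤ) +
        ((n+m2+3).choose 2 : ℝ) * (n.choose 2 : ℝ) * a ^ (-2 : ℤ) -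
        ((n+m2+3).choose 1 : ℝ) * ((n + 1).choose 3 : ℝ) * a ^ (-3 : ℤ) +
        ((n + 2).choose 4 : ℝ) * a ^ (-4 : ℤ)) := by
    rw [hSval]
    have z1 : a ^ (-1 : ℤ) = (a ^ (1:ℕ))⁻¹ := by
      rw [show (-1:ℤ) = -((1:ℕ):ℤ) from by norm_num, zpow_neg, zpow_natCast]
    have z2 : a ^ (-2 : ℤ) = (a ^ (2:ℕ))⁻¹ := by
      rw [show (-2:ℤ) = -((2:ℕ):ℤ) from by norm_num, zpow_neg, zpow_natCast]
    have z3 : a ^ (-3 : ℤ) = (a ^ (3:ℕ))⁻¹ := by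
      rw [show (-3:ℤ) = -((3:ℕ):ℤ) from by norm_num, zpow_neg, zpow_natCast]
    have z4 : a ^ (-4 : ℤ) = (a ^ (4:ℕ))⁻¹ := by
      rw [show (-4:ℤ) = -((4:ℕ):ℤ) from by norm_num, zpow_neg, zpow_natCast]
    rw [z1, z2, z3, z4]
    rcases n with _ | _ | n'
    · simp only [c1R, c2R, chooseTwoR, chooseThreeR, chooseFourR, Nat.choose_one_right,
        Nat.zero_sub, Nat.cast_zero]
      push_cast
      field_simp
      ring
    · simp only [c1R, c2R, chooseTwoR, chooseThreeR, chooseFourR, Nat.choose_one_right]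
      norm_num
      push_cast
      field_simp
      ring
    · rw [show n'+2-1 = n'+1 from by omega, show n'+2-2 = n' from by omega]
      simp only [c1R, c2R, chooseTwoR, chooseThreeR, chooseFourR, Nat.choose_one_right]
      push_cast
      field_simp
      ring
  rw [key]
  have pn := (poch_half_pos n).ne'
  have pm := (poch_half_pos (m2+2)).ne'
  field_simp
end
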